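/- For every real number t, the matrix L(t)·L(t)ᵀ − (1 + 2t² − 2|t|·√(1 + t²))·I₄ is positive semidefinite, where L(t) is the 4×4 real matrix [[1,0,0,0],[0,1,0,0],[t,t,1,0],[t,t,0,1]]. -/

import Mathlib

open Matrix

set_option maxHeartbeats 1000000

theorem vertical_noise_eigenvalue_bound (t : ℝ) :
    ((!![1, 0, 0, 0;
         0, 1, 0, 0;
         t, t, 1, 0;
         t, t, 0, 1] : Matrix (Fin 4) (Fin 4) ℝ)
      * (!![1, 0, 0, 0;
            0, 1, 0, 0;
            t, t, 1, 0;
            t, t, 0, 1] : Matrix (Fin 4) (Fin 4) ℝ)ᵀ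
      - (1 + 2 * t ^ 2 - 2 * |t| * Real.sqrt (1 + t ^ 2)) • 1).PosSemidef := by
  have hs0 : 0 ≤ |t| * Real.sqrt (1 + t ^ 2) := by positivity
  have hs2 : (|t| * Real.sqrt (1 + t ^ 2)) ^ 2 = t ^ 2 + t ^ 4 := by
    rw [mul_pow, sq_abs, Real.sq_sqrt (by positivity)]; ring
  rw [mul_assoc 2 |t| (Real.sqrt (1 + t ^ 2))]
  set s := |t| * Real.sqrt (1 + t ^ 2) with hs
  have hst : t ^ 2 ≤ s := by nlinarith [sq_nonneg (s - t^2), sq_nonneg (s + t^2)]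
  have hT : (!![1, 0, 0, 0; 0, 1, 0, 0; t, t, 1, 0; t, t, 0, 1] :
      Matrix (Fin 4) (Fin 4) ℝ)ᵀ = !![1, 0, t, t; 0, 1, t, t; 0, 0, 1, 0; 0, 0, 0, 1] := by
    ext i j; fin_cases i <;> fin_cases j <;> rfl
  rw [hT]
  have hA : (!![1, 0, 0, 0; 0, 1, 0, 0; t, t, 1, 0; t, t, 0, 1] :
        Matrix (Fin 4) (Fin 4) ℝ) * !![1, 0, t, t; 0, 1, t, t; 0, 0, 1, 0; 0, 0, 0, 1]
      - (1 + 2 * t ^ 2 - 2 * s) • 1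
      = !![2*s - 2*t^2, 0, t, t;
           0, 2*s - 2*t^2, t, t;
           t, t, 2*s, 2*t^2;
           t, t, 2*t^2, 2*s] := by
    ext i j
    fin_cases i <;> fin_cases j <;>
      simp [Matrix.mul_apply, Fin.sum_univ_four, Matrix.one_apply] <;> ring
  rw [hA]
  rw [Matrix.posSemidef_iff_dotProduct_mulVec]
  constructor
  · ext i j
    fin_cases i <;> fin_cases j <;> simp [Matrix.vecHead, Matrix.vecTail]
  · intro x
    simp only [star_trivial]
    simp [dotProduct, Matrix.mulVec, Fin.sum_univ_four, Matrix.cons_val_zero,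
      Matrix.cons_val_one, Matrix.head_cons, Matrix.vecHead, Matrix.vecTail]
    rcases eq_or_ne t 0 with ht | ht
    · subst ht
      nlinarith [mul_nonneg hs0 (sq_nonneg (x 0)), mul_nonneg hs0 (sq_nonneg (x 1)),
        mul_nonneg hs0 (sq_nonneg (x 2)), mul_nonneg hs0 (sq_nonneg (x 3))]
    · have hsp : 0 < s + t ^ 2 := by
        have h1 : 0 < t ^ 2 := by positivity
        linarith
      have key : (s + t ^ 2) *
          (x 0 * ((2 * s - 2 * t ^ 2) * x 0 + t * x 2 + t * x 3)
            + x 1 * ((2 * s - 2 * t ^ 2) * x 1 + t * x 2 + t * x 3)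
            + x 2 * (t * x 0 + t * x 1 + 2 * s * x 2 + 2 * t ^ 2 * x 3)
            + x 3 * (t * x 0 + t * x 1 + 2 * t ^ 2 * x 2 + 2 * s * x 3))
          = t ^ 2 * (x 0 - x 1) ^ 2 + t ^ 2 * (x 2 - x 3) ^ 2
            + (t * (x 0 + x 1) + (s + t ^ 2) * (x 2 + x 3)) ^ 2 := by
        linear_combination (2 * ((x 0) ^ 2 + (x 1) ^ 2 + (x 2) ^ 2 + (x 3) ^ 2)
          - (x 2 + x 3) ^ 2) * hs2
      have hEn : 0 ≤ (s + t ^ 2) *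
          (x 0 * ((2 * s - 2 * t ^ 2) * x 0 + t * x 2 + t * x 3)
            + x 1 * ((2 * s - 2 * t ^ 2) * x 1 + t * x 2 + t * x 3)
            + x 2 * (t * x 0 + t * x 1 + 2 * s * x 2 + 2 * t ^ 2 * x 3)
            + x 3 * (t * x 0 + t * x 1 + 2 * t ^ 2 * x 2 + 2 * s * x 3)) := by
        rw [key]; positivity
      nlinarith [hEn, hsp]
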